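/- Let W be a monotone sequentially complete vector lattice carrying a faithful positive linear functional, and let V be a linear subspace of W that is monotone sequentially closed in W (i.e., V contains the supremum in W of every increasing sequence in V that is bounded above in W). Then V is monotone closed in W: for every nonempty upward directed subset J of V bounded above in W, the supremum of J in W exists and belongs to V. -/
import Mathlib


/-- In a monotone sequentially complete vector lattice with a faithful positive
linear functional, a monotone sequentially closed linear subspace is monotone
closed. -/
theorem stmt_3 {W : Type*} [Lattice W] [AddCommGroup W] [Module ℝ W]
    [CovariantClass W W (· + ·) (· ≤ ·)] [PosSMulMono ℝ W]
    (ψ : W →ₗ[ℝ] ℝ)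
    (hψpos : ∀ a : W, 0 ≤ a → 0 ≤ ψ a)
    (hψfaith : ∀ a : W, 0 ≤ a → a ≠ 0 → 0 < ψ a)
    (hseq : ∀ f : ℕ → W, Monotone f → BddAbove (Set.range f) →
      ∃ s, IsLUB (Set.range f) s)
    (V : Submodule ℝ W)
    (hVclosed : ∀ f : ℕ → W, (∀ n, f n ∈ V) → Monotone f →
      BddAbove (Set.range f) → ∀ s : W, IsLUB (Set.range f) s → s ∈ V) :
    ∀ J : Set W, J ⊆ V → J.Nonempty → DirectedOn (· ≤ ·) J → BddAbove J →
      ∃ s : W, IsLUB J s ∧ s ∈ V := by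
  intro J hJV hJne hJdir hJbdd
  -- monotonicity of ψ
  have hmono : ∀ a b : W, a ≤ b → ψ a ≤ ψ b := by
    intro a b hab
    have h := hψpos (b - a) (by simpa using hab)
    have : ψ b - ψ a = ψ (b - a) := by rw [map_sub]
    linarith
  obtain ⟨b, hb⟩ := hJbdd
  -- the image is bounded above
  have hbdd : BddAbove (ψ '' J) := by
    refine ⟨ψ b, ?_⟩
    rintro _ ⟨x, hx, rfl⟩
    exact hmono _ _ (hb hx)
  have hne' : (ψ '' J).Nonempty := hJne.image ψ
  set α : ℝ := sSup (ψ '' J) with hα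
  have hle_α : ∀ x ∈ J, ψ x ≤ α := fun x hx => le_csSup hbdd ⟨x, hx, rfl⟩
  -- choose jseq n ∈ J with α - 1/(n+1) < ψ (jseq n)
  have hsel : ∀ n : ℕ, ∃ x ∈ J, α - 1 / (n + 1) < ψ x := by
    intro n
    have hlt : α - 1 / (n + 1 : ℝ) < α := by
      have : (0:ℝ) < 1 / (n + 1) := by positivity
      linarith
    obtain ⟨y, hy, hlty⟩ := exists_lt_of_lt_csSup hne' hlt
    obtain ⟨x, hx, rfl⟩ := hy
    exact ⟨x, hx, hlty⟩
  choose jseq hjmem hjlt using hsel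
  -- build an increasing sequence in J dominating jseq
  have hstep : ∀ (a : {x // x ∈ J}) (n : ℕ),
      ∃ c : {x // x ∈ J}, a.1 ≤ c.1 ∧ jseq n ≤ c.1 := by
    intro a n
    obtain ⟨c, hc, hc1, hc2⟩ := hJdir a.1 a.2 (jseq n) (hjmem n)
    exact ⟨⟨c, hc⟩, hc1, hc2⟩
  choose g hg1 hg2 using hstep
  let F : ℕ → {x // x ∈ J} := fun n =>
    Nat.rec ⟨jseq 0, hjmem 0⟩ (fun n Fn => g Fn (n + 1)) n
  set f : ℕ → W := fun n => (F n).1 with hf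
  have hfJ : ∀ n, f n ∈ J := fun n => (F n).2
  have hfmono : Monotone f := by
    apply monotone_nat_of_le_succ
    intro n
    exact hg1 (F n) (n + 1)
  have hfge : ∀ n, ψ (jseq n) ≤ ψ (f n) := by
    intro n
    cases n with
    | zero => exact le_refl _
    | succ m => exact hmono _ _ (hg2 (F m) (m + 1))
  have hfbdd : BddAbove (Set.range f) := by
    refine ⟨b, ?_⟩
    rintro _ ⟨n, rfl⟩
    exact hb (hfJ n)
  obtain ⟨s, hs⟩ := hseq f hfmono hfbdd
  have hsV : s ∈ V := hVclosed f (fun n => hJV (hfJ n)) hfmono hfbdd s hs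
  -- s is an upper bound of J
  have hub : ∀ j ∈ J, j ≤ s := by
    intro j hj
    -- show (j - s)⁺ = 0
    have hkey : ∀ n : ℕ, ψ ((j - s)⁺) ≤ 1 / (n + 1) := by
      intro n
      have hfns : f n ≤ s := hs.1 ⟨n, rfl⟩
      have h1 : (j - s)⁺ ≤ (j - f n)⁺ :=
        posPart_mono (sub_le_sub_left hfns j)
      have h2 : ψ ((j - s)⁺) ≤ ψ ((j - f n)⁺) := hmono _ _ h1
      -- (j - f n)⁺ = j ⊔ f n - f n
      have h3 : (j - f n)⁺ = j ⊔ f n - f n := by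
        rw [posPart_def, sup_sub, sub_self]
      obtain ⟨k, hk, hk1, hk2⟩ := hJdir (f n) (hfJ n) j hj
      have h4 : j ⊔ f n ≤ k := sup_le hk2 hk1
      have h5 : ψ ((j - f n)⁺) ≤ ψ k - ψ (f n) := by
        rw [h3, map_sub]
        have := hmono _ _ h4
        linarith
      have h6 : ψ k ≤ α := hle_α k hk
      have h7 : α - 1 / (n + 1) < ψ (f n) := lt_of_lt_of_le (hjlt n) (hfge n)
      linarith
    have hnn : 0 ≤ ψ ((j - s)⁺) := hψpos _ (posPart_nonneg _)
    have hzero : ψ ((j - s)⁺) = 0 := by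
      by_contra h
      have hpos : 0 < ψ ((j - s)⁺) := lt_of_le_of_ne hnn (Ne.symm h)
      obtain ⟨n, hn⟩ := exists_nat_one_div_lt hpos
      exact absurd (hkey n) (not_le.mpr hn)
    have hpz : (j - s)⁺ = 0 := by
      by_contra h
      exact absurd hzero (ne_of_gt (hψfaith _ (posPart_nonneg _) h))
    have : j - s ≤ 0 := posPart_eq_zero.mp hpz
    exact sub_nonpos.mp this
  exact ⟨s, ⟨hub, fun c hc => hs.2 (by rintro _ ⟨n, rfl⟩; exact hc (hfJ n))⟩, hsV⟩
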